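/- arXiv:1809.03145 — 4 statements merged into one kernel-verified Lean document; each statement's English description precedes it below -/
import Mathlib

section
/- Let Z be a Student t-distributed random variable with k degrees of freedom. There exist constants c, C > 0 independent of k such that for all b ≥ 1/√k, c·(1+b²)^{-(k-1)/2}/(√k·b) ≤ P(|Z| ≥ √k·b) ≤ C·(1+b²)^{-(k-1)/2}/(√k·b). -/
open MeasureTheory ProbabilityTheory Real Set Filter Topology

lemma st_base_pos (s : ℝ) : (0:ℝ) < 1 + s ^ 2 := by positivity

lemma st_cont (p : ℝ) : Continuous (fun s : ℝ => (1 + s ^ 2) ^ (-p)) := by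
  apply Continuous.rpow_const (by continuity)
  exact fun x => Or.inl (st_base_pos x).ne'

lemma st_integrable {q : ℝ} (hq : 1 ≤ q) :
    Integrable (fun s : ℝ => (1 + s ^ 2) ^ (-q)) := by
  apply Integrable.mono' integrable_inv_one_add_sq (st_cont q).aestronglyMeasurable
  filter_upwards with s
  rw [Real.norm_eq_abs, abs_of_nonneg (Real.rpow_nonneg (st_base_pos s).le _)]
  calc (1 + s ^ 2) ^ (-q) ≤ (1 + s ^ 2) ^ (-1 : ℝ) :=
        Real.rpow_le_rpow_of_exponent_le (by nlinarith [sq_nonneg s]) (by linarith)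
    _ = (1 + s ^ 2)⁻¹ := Real.rpow_neg_one _

lemma st_hasDeriv (k : ℕ) (hk : 1 ≤ k) {γ a : ℝ} (hγ : 0 < γ) {x : ℝ} (hx : a ≤ x) :
    HasDerivAt (fun y => -(1 + γ * (y - a)) ^ (-(k:ℝ)) / (γ * k))
      ((1 + γ * (x - a)) ^ (-((k:ℝ) + 1))) x := by
  have hkpos : (0:ℝ) < k := by exact_mod_cast hk
  have hpos : (0:ℝ) < 1 + γ * (x - a) := by nlinarith
  have h1 : HasDerivAt (fun y : ℝ => 1 + γ * (y - a)) γ x := by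
    simpa using (((hasDerivAt_id x).sub_const a).const_mul γ).const_add 1
  have h2 := (h1.rpow_const (p := -(k:ℝ)) (Or.inl hpos.ne')).neg.div_const (γ * k)
  refine h2.congr_deriv ?_
  have : -(k:ℝ) - 1 = -((k:ℝ) + 1) := by ring
  rw [← this]
  field_simp

lemma st_tendsto (k : ℕ) (hk : 1 ≤ k) {γ : ℝ} (a : ℝ) (hγ : 0 < γ) :
    Tendsto (fun y => -(1 + γ * (y - a)) ^ (-(k:ℝ)) / (γ * k)) atTop (𝓝 0) := by
  have hkpos : (0:ℝ) < k := by exact_mod_cast hk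
  have h0 : Tendsto (fun y : ℝ => y - a) atTop atTop := by
    simpa [sub_eq_add_neg] using tendsto_atTop_add_const_right atTop (-a) tendsto_id
  have h1 : Tendsto (fun y : ℝ => 1 + γ * (y - a)) atTop atTop :=
    tendsto_atTop_add_const_left _ 1 (h0.const_mul_atTop hγ)
  have h2 := (tendsto_rpow_neg_atTop hkpos).comp h1
  have h3 := (h2.neg).div_const (γ * k)
  simpa using h3

lemma st_integral_Ioi (k : ℕ) (hk : 1 ≤ k) {γ : ℝ} (a : ℝ) (hγ : 0 < γ) :
    ∫ x in Ioi a, (1 + γ * (x - a)) ^ (-((k:ℝ) + 1)) = 1 / (γ * k) := by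
  rw [integral_Ioi_of_hasDerivAt_of_nonneg' (fun x hx => st_hasDeriv k hk hγ hx)
    (fun x hx => Real.rpow_nonneg (by nlinarith [hx.out.le] : (0:ℝ) ≤ 1 + γ * (x - a)) _)
    (st_tendsto k hk a hγ)]
  simp
  field_simp

lemma st_integrableOn_Ioi (k : ℕ) (hk : 1 ≤ k) {γ : ℝ} (a : ℝ) (hγ : 0 < γ) :
    IntegrableOn (fun x => (1 + γ * (x - a)) ^ (-((k:ℝ) + 1))) (Ioi a) :=
  integrableOn_Ioi_deriv_of_nonneg' (fun x hx => st_hasDeriv k hk hγ hx)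
    (fun x hx => Real.rpow_nonneg (by nlinarith [hx.out.le] : (0:ℝ) ≤ 1 + γ * (x - a)) _)
    (st_tendsto k hk a hγ)

lemma st_integral_Ioc (k : ℕ) (hk : 1 ≤ k) {γ δ : ℝ} (a : ℝ) (hγ : 0 < γ) (hδ : 0 ≤ δ) :
    ∫ x in Ioc a (a + δ), (1 + γ * (x - a)) ^ (-((k:ℝ) + 1))
      = (1 - (1 + γ * δ) ^ (-(k:ℝ))) / (γ * k) := by
  have hle : a ≤ a + δ := by linarith
  rw [← intervalIntegral.integral_of_le hle]
  rw [intervalIntegral.integral_eq_sub_of_hasDerivAt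
    (f := fun y => -(1 + γ * (y - a)) ^ (-(k:ℝ)) / (γ * k))
    (fun x hx => by
      rw [uIcc_of_le hle] at hx
      exact st_hasDeriv k hk hγ hx.1)
    (by
      apply ContinuousOn.intervalIntegrable
      apply ContinuousOn.rpow_const (by fun_prop)
      intro x hx
      rw [uIcc_of_le hle] at hx
      exact Or.inl (ne_of_gt (by nlinarith [hx.1] : (0:ℝ) < 1 + γ * (x - a))))]
  have h1 : a + δ - a = δ := by ring
  have hkpos : (0:ℝ) < k := by exact_mod_cast hk
  rw [h1]
  simp only [sub_self, mul_zero, add_zero, Real.one_rpow]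
  field_simp
  ring

lemma st_tail_upper (k : ℕ) (hk : 1 ≤ k) {b : ℝ} (hb : 0 < b) :
    ∫ s in Ioi b, (1 + s ^ 2) ^ (-(((k:ℝ) + 1) / 2))
      ≤ (1 + b ^ 2) ^ (-(((k:ℝ) - 1) / 2)) / (k * b) := by
  have hb2 : (0:ℝ) < 1 + b ^ 2 := st_base_pos b
  have hk1 : (1:ℝ) ≤ (k:ℝ) := by exact_mod_cast hk
  set β : ℝ := b / (1 + b ^ 2) with hβdef
  have hβ : 0 < β := div_pos hb hb2
  have hβb : β * (1 + b ^ 2) = b := div_mul_cancel₀ b hb2.ne'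
  have hp1 : (1:ℝ) ≤ ((k:ℝ) + 1) / 2 := by linarith
  have key : ∀ s ∈ Ioi b, (1 + s ^ 2) ^ (-(((k:ℝ) + 1) / 2))
      ≤ (1 + b ^ 2) ^ (-(((k:ℝ) + 1) / 2)) * (1 + β * (s - b)) ^ (-((k:ℝ) + 1)) := by
    intro s hs
    have hsb : b ≤ s := le_of_lt hs
    have hu : 0 ≤ β * (s - b) := mul_nonneg hβ.le (by linarith)
    have h1u : (0:ℝ) < 1 + β * (s - b) := by linarith
    have hβ1 : β * b ≤ 1 := by
      rw [hβdef, div_mul_eq_mul_div, div_le_one hb2]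
      nlinarith
    have hprod : (1 + b ^ 2) * (1 + β * (s - b)) ^ 2 ≤ 1 + s ^ 2 := by
      nlinarith [hβb, hβ1, sq_nonneg (s - b), mul_nonneg hβ.le (sq_nonneg (s - b)),
        (by linarith : (0:ℝ) ≤ s - b)]
    calc (1 + s ^ 2) ^ (-(((k:ℝ) + 1) / 2))
        ≤ ((1 + b ^ 2) * (1 + β * (s - b)) ^ 2) ^ (-(((k:ℝ) + 1) / 2)) :=
          Real.rpow_le_rpow_of_nonpos (by positivity) hprod (by linarith)
      _ = (1 + b ^ 2) ^ (-(((k:ℝ) + 1) / 2)) * ((1 + β * (s - b)) ^ 2) ^ (-(((k:ℝ) + 1) / 2)) :=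
          Real.mul_rpow hb2.le (sq_nonneg _)
      _ = (1 + b ^ 2) ^ (-(((k:ℝ) + 1) / 2)) * (1 + β * (s - b)) ^ (-((k:ℝ) + 1)) := by
          congr 1
          rw [← Real.rpow_natCast (1 + β * (s - b)) 2, ← Real.rpow_mul h1u.le]
          congr 1
          push_cast
          ring
  have mono := setIntegral_mono_on ((st_integrable hp1).integrableOn)
    ((st_integrableOn_Ioi k hk b hβ).const_mul _) measurableSet_Ioi key
  rw [MeasureTheory.integral_const_mul, st_integral_Ioi k hk b hβ] at mono
  refine le_trans mono (le_of_eq ?_)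
  have hsplit : (1 + b ^ 2) ^ (-(((k:ℝ) - 1) / 2))
      = (1 + b ^ 2) ^ (-(((k:ℝ) + 1) / 2)) * (1 + b ^ 2) := by
    rw [← Real.rpow_add_one hb2.ne']
    congr 1
    ring
  rw [hsplit, hβdef]
  have hkpos : (0:ℝ) < k := by linarith
  field_simp

set_option maxHeartbeats 1000000 in
lemma st_tail_lower (k : ℕ) (hk : 1 ≤ k) {b : ℝ} (hb : 0 < b) (hkb : 1 ≤ (k:ℝ) * b ^ 2) :
    (1 + b ^ 2) ^ (-(((k:ℝ) - 1) / 2)) / (4 * ((k:ℝ) * b))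
      ≤ ∫ s in Ioi b, (1 + s ^ 2) ^ (-(((k:ℝ) + 1) / 2)) := by
  have hb2 : (0:ℝ) < 1 + b ^ 2 := st_base_pos b
  have hk1 : (1:ℝ) ≤ (k:ℝ) := by exact_mod_cast hk
  have hkpos : (0:ℝ) < k := by linarith
  have hp1 : (1:ℝ) ≤ ((k:ℝ) + 1) / 2 := by linarith
  set δ : ℝ := (1 + b ^ 2) / ((k:ℝ) * b) with hδdef
  have hδ : 0 < δ := div_pos hb2 (by positivity)
  set γ : ℝ := (2 * b + δ) / (2 * (1 + b ^ 2)) with hγdef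
  have hγ : 0 < γ := div_pos (by linarith) (by positivity)
  have hγb : γ * (2 * (1 + b ^ 2)) = 2 * b + δ := div_mul_cancel₀ _ (by positivity)
  have hδb : δ * ((k:ℝ) * b) = 1 + b ^ 2 := div_mul_cancel₀ _ (by positivity)
  have hγδ : 1 ≤ (k:ℝ) * (γ * δ) := by
    have h1 : b * δ * (k:ℝ) = 1 + b ^ 2 := by rw [← hδb]; ring
    have : γ * δ ≥ b * δ / (1 + b ^ 2) := by
      rw [hγdef, div_mul_eq_mul_div, ge_iff_le, div_le_div_iff₀ hb2 (by positivity)]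
      nlinarith [mul_nonneg hδ.le hδ.le]
    calc (1:ℝ) = (k:ℝ) * (b * δ / (1 + b ^ 2)) := by
            field_simp
            nlinarith [h1]
      _ ≤ (k:ℝ) * (γ * δ) := by
            exact mul_le_mul_of_nonneg_left this (by positivity)
  have hγle : γ * (1 + b ^ 2) ≤ 2 * b := by
    have hδ2b : δ ≤ 2 * b := by
      rw [hδdef, div_le_iff₀ (by positivity)]
      nlinarith
    nlinarith [hγb]
  -- the comparison function
  have key : ∀ s ∈ Ioc b (b + δ),
      (1 + b ^ 2) ^ (-(((k:ℝ) + 1) / 2)) * (1 + γ * (s - b)) ^ (-((k:ℝ) + 1))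
        ≤ (1 + s ^ 2) ^ (-(((k:ℝ) + 1) / 2)) := by
    intro s hs
    have hu0 : 0 ≤ s - b := by linarith [hs.1.le]
    have huδ : s - b ≤ δ := by linarith [hs.2]
    have h1u : (0:ℝ) < 1 + γ * (s - b) := by nlinarith
    have hprod : 1 + s ^ 2 ≤ (1 + b ^ 2) * (1 + γ * (s - b)) ^ 2 := by
      nlinarith [hγb, mul_nonneg (by linarith : (0:ℝ) ≤ δ - (s - b)) hu0,
        mul_nonneg (sq_nonneg (γ * (s - b))) hb2.le]
    calc (1 + b ^ 2) ^ (-(((k:ℝ) + 1) / 2)) * (1 + γ * (s - b)) ^ (-((k:ℝ) + 1))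
        = (1 + b ^ 2) ^ (-(((k:ℝ) + 1) / 2)) * ((1 + γ * (s - b)) ^ 2) ^ (-(((k:ℝ) + 1) / 2)) := by
          congr 1
          rw [← Real.rpow_natCast (1 + γ * (s - b)) 2, ← Real.rpow_mul h1u.le]
          congr 1
          push_cast
          ring
      _ = ((1 + b ^ 2) * (1 + γ * (s - b)) ^ 2) ^ (-(((k:ℝ) + 1) / 2)) :=
          (Real.mul_rpow hb2.le (sq_nonneg _)).symm
      _ ≤ (1 + s ^ 2) ^ (-(((k:ℝ) + 1) / 2)) :=
          Real.rpow_le_rpow_of_nonpos (st_base_pos s) hprod (by linarith)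
  -- integrabilities
  have hgint : IntegrableOn (fun s : ℝ => (1 + s ^ 2) ^ (-(((k:ℝ) + 1) / 2))) (Ioi b) :=
    (st_integrable hp1).integrableOn
  have hhint : IntegrableOn
      (fun s : ℝ => (1 + b ^ 2) ^ (-(((k:ℝ) + 1) / 2)) * (1 + γ * (s - b)) ^ (-((k:ℝ) + 1)))
      (Ioc b (b + δ)) :=
    (((st_integrableOn_Ioi k hk b hγ).mono_set Ioc_subset_Ioi_self).const_mul _)
  have step1 : ∫ s in Ioc b (b + δ), (1 + s ^ 2) ^ (-(((k:ℝ) + 1) / 2))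
      ≤ ∫ s in Ioi b, (1 + s ^ 2) ^ (-(((k:ℝ) + 1) / 2)) := by
    apply setIntegral_mono_set hgint
    · filter_upwards with s using Real.rpow_nonneg (st_base_pos s).le _
    · filter_upwards with s hs using Ioc_subset_Ioi_self hs
  have step2 := setIntegral_mono_on hhint (hgint.mono_set Ioc_subset_Ioi_self)
    measurableSet_Ioc key
  rw [MeasureTheory.integral_const_mul, st_integral_Ioc k hk b hγ hδ.le] at step2
  refine le_trans ?_ (le_trans step2 step1)
  -- final arithmetic
  have hr : (1 + γ * δ) ^ (-(k:ℝ)) ≤ 1 / 2 := by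
    have h2 : (2:ℝ) ≤ (1 + γ * δ) ^ (k:ℕ) := by
      have := one_add_mul_le_pow (a := γ * δ) (by nlinarith) k
      nlinarith
    rw [Real.rpow_neg (by nlinarith), Real.rpow_natCast]
    rw [one_div]
    exact inv_anti₀ (by norm_num) h2
  have hsplit : (1 + b ^ 2) ^ (-(((k:ℝ) - 1) / 2))
      = (1 + b ^ 2) ^ (-(((k:ℝ) + 1) / 2)) * (1 + b ^ 2) := by
    rw [← Real.rpow_add_one hb2.ne']
    congr 1
    ring
  rw [hsplit, mul_div_assoc]
  apply mul_le_mul_of_nonneg_left _ (Real.rpow_nonneg hb2.le _)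
  rw [div_le_div_iff₀ (by positivity) (by positivity)]
  nlinarith [hγle, hr, mul_pos hγ hkpos, mul_pos hb hkpos,
    mul_le_mul_of_nonneg_right hγle hkpos.le]

lemma st_exp_half : Real.exp (1/2) ≤ 2 := by
  nlinarith [Real.exp_one_lt_d9, Real.exp_pos (1/2:ℝ),
    (by rw [← Real.exp_add]; norm_num : Real.exp (1/2) * Real.exp (1/2) = Real.exp 1)]

lemma st_one_add_inv_k (k : ℕ) (hk : 1 ≤ k) :
    (1/2 : ℝ) ≤ (1 + 1/(k:ℝ)) ^ (-(((k:ℝ) - 1) / 2)) := by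
  have hk1 : (1:ℝ) ≤ (k:ℝ) := by exact_mod_cast hk
  have hkpos : (0:ℝ) < k := by linarith
  have hbase : (1:ℝ) ≤ 1 + 1/(k:ℝ) := by
    have : (0:ℝ) < 1/(k:ℝ) := by positivity
    linarith
  have he : (0:ℝ) ≤ ((k:ℝ) - 1) / 2 := by linarith
  have hX : (1 + 1/(k:ℝ)) ^ (((k:ℝ) - 1) / 2) ≤ 2 := by
    have h1 : (1 + 1/(k:ℝ)) ≤ Real.exp (1/(k:ℝ)) := by
      have := Real.add_one_le_exp (1/(k:ℝ))
      linarith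
    calc (1 + 1/(k:ℝ)) ^ (((k:ℝ) - 1) / 2)
        ≤ Real.exp (1/(k:ℝ)) ^ (((k:ℝ) - 1) / 2) :=
          Real.rpow_le_rpow (by positivity) h1 he
      _ = Real.exp (1/(k:ℝ) * (((k:ℝ) - 1) / 2)) := (Real.exp_mul _ _).symm
      _ ≤ Real.exp (1/2) := by
          apply Real.exp_le_exp.mpr
          rw [div_mul_eq_mul_div, one_mul, div_div]
          rw [div_le_div_iff₀ (by positivity) (by norm_num)]
          nlinarith
      _ ≤ 2 := st_exp_half
  have hXpos : (0:ℝ) < (1 + 1/(k:ℝ)) ^ (((k:ℝ) - 1) / 2) := Real.rpow_pos_of_pos (by positivity) _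
  rw [Real.rpow_neg (by positivity)]
  calc (1/2:ℝ) = 2⁻¹ := by norm_num
    _ ≤ ((1 + 1/(k:ℝ)) ^ (((k:ℝ) - 1) / 2))⁻¹ := inv_anti₀ hXpos hX

lemma st_G_bounds (k : ℕ) (hk : 1 ≤ k) :
    1 / (8 * Real.sqrt k) ≤ (∫ s in Ioi (0:ℝ), (1 + s ^ 2) ^ (-(((k:ℝ) + 1) / 2))) ∧
    (∫ s in Ioi (0:ℝ), (1 + s ^ 2) ^ (-(((k:ℝ) + 1) / 2))) ≤ 2 / Real.sqrt k := by
  have hk1 : (1:ℝ) ≤ (k:ℝ) := by exact_mod_cast hk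
  have hkpos : (0:ℝ) < k := by linarith
  have hp1 : (1:ℝ) ≤ ((k:ℝ) + 1) / 2 := by linarith
  set sk : ℝ := Real.sqrt k with hskdef
  have hsk : 0 < sk := Real.sqrt_pos.mpr hkpos
  have hsk2 : sk ^ 2 = (k:ℝ) := Real.sq_sqrt hkpos.le
  set b₀ : ℝ := 1 / sk with hb₀def
  have hb₀ : 0 < b₀ := by positivity
  have hb₀2 : b₀ ^ 2 = 1 / (k:ℝ) := by
    rw [hb₀def, div_pow, one_pow, hsk2]
  have hkb₀2 : (k:ℝ) * b₀ ^ 2 = 1 := by rw [hb₀2]; field_simp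
  have hkb₀ : (k:ℝ) * b₀ = sk := by
    rw [hb₀def, ← hsk2]; field_simp
  have hgint : Integrable (fun s : ℝ => (1 + s ^ 2) ^ (-(((k:ℝ) + 1) / 2))) := st_integrable hp1
  have hgnn : ∀ s : ℝ, 0 ≤ (1 + s ^ 2) ^ (-(((k:ℝ) + 1) / 2)) :=
    fun s => Real.rpow_nonneg (st_base_pos s).le _
  have hsplit : (∫ s in Ioi (0:ℝ), (1 + s ^ 2) ^ (-(((k:ℝ) + 1) / 2)))
      = (∫ s in Ioc (0:ℝ) b₀, (1 + s ^ 2) ^ (-(((k:ℝ) + 1) / 2)))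
        + ∫ s in Ioi b₀, (1 + s ^ 2) ^ (-(((k:ℝ) + 1) / 2)) := by
    rw [← setIntegral_union (Ioc_disjoint_Ioi le_rfl) measurableSet_Ioi
      hgint.integrableOn hgint.integrableOn, Ioc_union_Ioi_eq_Ioi hb₀.le]
  constructor
  · -- lower bound
    have h1 : ∫ s in Ioi b₀, (1 + s ^ 2) ^ (-(((k:ℝ) + 1) / 2))
        ≤ ∫ s in Ioi (0:ℝ), (1 + s ^ 2) ^ (-(((k:ℝ) + 1) / 2)) := by
      apply setIntegral_mono_set hgint.integrableOn
      · filter_upwards with s using hgnn s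
      · filter_upwards with s hs using Ioi_subset_Ioi hb₀.le hs
    refine le_trans ?_ (le_trans (st_tail_lower k hk hb₀ (le_of_eq hkb₀2.symm)) h1)
    rw [hb₀2, hkb₀]
    rw [div_le_div_iff₀ (by positivity) (by positivity)]
    have := st_one_add_inv_k k hk
    nlinarith [this, hsk]
  · -- upper bound
    rw [hsplit]
    have h1 : ∫ s in Ioc (0:ℝ) b₀, (1 + s ^ 2) ^ (-(((k:ℝ) + 1) / 2)) ≤ b₀ := by
      have hmono := setIntegral_mono_on (s := Ioc (0:ℝ) b₀) (g := fun _ => (1:ℝ))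
        hgint.integrableOn (integrableOn_const measure_Ioc_lt_top.ne)
        measurableSet_Ioc
        (fun s _ => Real.rpow_le_one_of_one_le_of_nonpos
          (by nlinarith [sq_nonneg s] : (1:ℝ) ≤ 1 + s ^ 2) (by linarith))
      simpa [Real.volume_Ioc, ENNReal.toReal_ofReal hb₀.le, hb₀.le] using hmono
    have h2 : ∫ s in Ioi b₀, (1 + s ^ 2) ^ (-(((k:ℝ) + 1) / 2)) ≤ 1 / sk := by
      refine le_trans (st_tail_upper k hk hb₀) ?_
      rw [hkb₀]
      gcongr
      · exact Real.rpow_le_one_of_one_le_of_nonpos (by nlinarith [sq_nonneg b₀]) (by linarith)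
    calc _ ≤ b₀ + 1/sk := add_le_add h1 h2
      _ = 2 / sk := by rw [hb₀def]; ring

lemma st_F_eq (k : ℕ) (hk : 1 ≤ k) (s : ℝ) :
    (1 + (Real.sqrt k * s) ^ 2 / (k:ℝ)) ^ (-(((k:ℝ) + 1) / 2))
      = (1 + s ^ 2) ^ (-(((k:ℝ) + 1) / 2)) := by
  have hkpos : (0:ℝ) < k := by exact_mod_cast hk
  congr 1
  rw [mul_pow, Real.sq_sqrt hkpos.le]
  field_simp

lemma st_F_cont (k : ℕ) (hk : 1 ≤ k) :
    Continuous (fun t : ℝ => (1 + t ^ 2 / (k:ℝ)) ^ (-(((k:ℝ) + 1) / 2))) := by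
  have hkpos : (0:ℝ) < k := by exact_mod_cast hk
  apply Continuous.rpow_const (by continuity)
  intro t
  exact Or.inl (by positivity)

lemma st_F_integrable (k : ℕ) (hk : 1 ≤ k) :
    Integrable (fun t : ℝ => (1 + t ^ 2 / (k:ℝ)) ^ (-(((k:ℝ) + 1) / 2))) := by
  have hkpos : (0:ℝ) < k := by exact_mod_cast hk
  have hk1 : (1:ℝ) ≤ (k:ℝ) := by exact_mod_cast hk
  apply Integrable.mono' (integrable_inv_one_add_sq.const_mul (k:ℝ))
    (st_F_cont k hk).aestronglyMeasurable
  filter_upwards with t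
  have hbase : (0:ℝ) < 1 + t ^ 2 / (k:ℝ) := by positivity
  rw [Real.norm_eq_abs, abs_of_nonneg (Real.rpow_nonneg hbase.le _)]
  have hbase1 : (1:ℝ) ≤ 1 + t ^ 2 / (k:ℝ) := by
    have : (0:ℝ) ≤ t ^ 2 / (k:ℝ) := by positivity
    linarith
  have h1 : (1 + t ^ 2 / (k:ℝ)) ^ (-(((k:ℝ) + 1) / 2)) ≤ (1 + t ^ 2 / (k:ℝ)) ^ (-1 : ℝ) :=
    Real.rpow_le_rpow_of_exponent_le hbase1 (by linarith)
  have h2 : (1 + t ^ 2 / (k:ℝ)) ^ (-1 : ℝ) ≤ (k:ℝ) * (1 + t ^ 2)⁻¹ := by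
    rw [Real.rpow_neg_one]
    have hle : (1 + t ^ 2) / (k:ℝ) ≤ 1 + t ^ 2 / (k:ℝ) := by
      rw [div_le_iff₀ hkpos]
      have ht : t ^ 2 / (k:ℝ) * (k:ℝ) = t ^ 2 := div_mul_cancel₀ _ hkpos.ne'
      nlinarith [sq_nonneg t, ht]
    calc (1 + t ^ 2 / (k:ℝ))⁻¹
        ≤ ((1 + t ^ 2) / (k:ℝ))⁻¹ := inv_anti₀ (by positivity) hle
      _ = (k:ℝ) * (1 + t ^ 2)⁻¹ := by rw [inv_div, div_eq_mul_inv]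
  exact h1.trans h2

lemma st_F_comp_Ioi (k : ℕ) (hk : 1 ≤ k) (b : ℝ) :
    ∫ t in Ioi (Real.sqrt k * b), (1 + t ^ 2 / (k:ℝ)) ^ (-(((k:ℝ) + 1) / 2))
      = Real.sqrt k * ∫ s in Ioi b, (1 + s ^ 2) ^ (-(((k:ℝ) + 1) / 2)) := by
  have hkpos : (0:ℝ) < k := by exact_mod_cast hk
  have hsk : 0 < Real.sqrt k := Real.sqrt_pos.mpr hkpos
  have h := integral_comp_mul_left_Ioi
    (fun t : ℝ => (1 + t ^ 2 / (k:ℝ)) ^ (-(((k:ℝ) + 1) / 2))) b hsk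
  simp only [smul_eq_mul] at h
  have h2 : (∫ x in Ioi b, (1 + (Real.sqrt k * x) ^ 2 / (k:ℝ)) ^ (-(((k:ℝ) + 1) / 2)))
      = ∫ s in Ioi b, (1 + s ^ 2) ^ (-(((k:ℝ) + 1) / 2)) := by
    apply setIntegral_congr_fun measurableSet_Ioi
    intro s _
    exact st_F_eq k hk s
  rw [h2] at h
  rw [h]
  field_simp

lemma st_F_symm (k : ℕ) (a : ℝ) :
    ∫ t in Iic (-a), (1 + t ^ 2 / (k:ℝ)) ^ (-(((k:ℝ) + 1) / 2))
      = ∫ t in Ioi a, (1 + t ^ 2 / (k:ℝ)) ^ (-(((k:ℝ) + 1) / 2)) := by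
  rw [← integral_comp_neg_Ioi]
  apply setIntegral_congr_fun measurableSet_Ioi
  intro t _
  simp [neg_sq]

lemma st_set_eq {a : ℝ} : {t : ℝ | a ≤ |t|} = Iic (-a) ∪ Ici a := by
  ext t
  simp only [mem_setOf_eq, mem_union, mem_Iic, mem_Ici, le_abs, le_neg]
  tauto

lemma st_tail_integral (k : ℕ) (hk : 1 ≤ k) {a : ℝ} (ha : 0 < a) :
    ∫ t in {t : ℝ | a ≤ |t|}, (1 + t ^ 2 / (k:ℝ)) ^ (-(((k:ℝ) + 1) / 2))
      = 2 * ∫ t in Ioi a, (1 + t ^ 2 / (k:ℝ)) ^ (-(((k:ℝ) + 1) / 2)) := by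
  rw [st_set_eq]
  rw [setIntegral_union (by rw [Set.Iic_disjoint_Ici]; intro h; linarith) measurableSet_Ici
    (st_F_integrable k hk).integrableOn (st_F_integrable k hk).integrableOn]
  rw [integral_Ici_eq_integral_Ioi, st_F_symm]
  ring

/-- Tail bounds for the Student t distribution with `k` degrees of freedom,
with constants independent of `k`. The law of `Z` is encoded by its density
`ck * (1 + t^2/k)^(-(k+1)/2)` with normalizing constant `ck`. -/
theorem student_tail_bounds :
    ∃ c C : ℝ, 0 < c ∧ 0 < C ∧
      ∀ (k : ℕ), 1 ≤ k → ∀ ck : ℝ, 0 < ck →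
        ∀ μ : Measure ℝ,
          μ = volume.withDensity
            (fun t => ENNReal.ofReal (ck * (1 + t ^ 2 / (k : ℝ)) ^ (-(((k : ℝ) + 1) / 2)))) →
          IsProbabilityMeasure μ →
          ∀ b : ℝ, 1 / Real.sqrt k ≤ b →
            c * (1 + b ^ 2) ^ (-(((k : ℝ) - 1) / 2)) / (Real.sqrt k * b)
              ≤ (μ {t : ℝ | Real.sqrt k * b ≤ |t|}).toReal ∧
            (μ {t : ℝ | Real.sqrt k * b ≤ |t|}).toReal
              ≤ C * (1 + b ^ 2) ^ (-(((k : ℝ) - 1) / 2)) / (Real.sqrt k * b) := by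
  refine ⟨1/8, 8, by norm_num, by norm_num, ?_⟩
  intro k hk ck hck μ hμ hprob b hb
  subst hμ
  have hk1 : (1:ℝ) ≤ (k:ℝ) := by exact_mod_cast hk
  have hkpos : (0:ℝ) < k := by linarith
  have hsk : 0 < Real.sqrt k := Real.sqrt_pos.mpr hkpos
  have hsk2 : Real.sqrt k ^ 2 = (k:ℝ) := Real.sq_sqrt hkpos.le
  have hb0 : 0 < b := lt_of_lt_of_le (by positivity) hb
  have hskb : 1 ≤ b * Real.sqrt k := (div_le_iff₀ hsk).mp hb
  have hkb2 : 1 ≤ (k:ℝ) * b ^ 2 := by nlinarith [hskb, hsk2]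
  have hFint := st_F_integrable k hk
  have hfint : Integrable (fun t : ℝ => ck * (1 + t ^ 2 / (k:ℝ)) ^ (-(((k:ℝ) + 1) / 2))) :=
    hFint.const_mul ck
  have hfnn : ∀ t : ℝ, 0 ≤ ck * (1 + t ^ 2 / (k:ℝ)) ^ (-(((k:ℝ) + 1) / 2)) :=
    fun t => mul_nonneg hck.le (Real.rpow_nonneg (by positivity) _)
  have key : ∀ S : Set ℝ, MeasurableSet S →
      ((volume.withDensity
          (fun t => ENNReal.ofReal (ck * (1 + t ^ 2 / (k:ℝ)) ^ (-(((k:ℝ) + 1) / 2))))) S).toReal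
        = ∫ t in S, ck * (1 + t ^ 2 / (k:ℝ)) ^ (-(((k:ℝ) + 1) / 2)) := by
    intro S hS
    rw [withDensity_apply _ hS]
    rw [← ofReal_integral_eq_lintegral_ofReal hfint.integrableOn
      (Filter.Eventually.of_forall fun t => hfnn t)]
    exact ENNReal.toReal_ofReal (setIntegral_nonneg hS fun t _ => hfnn t)
  -- normalization
  obtain ⟨hG1, hG2⟩ := st_G_bounds k hk
  have hnorm : ck * (2 * (Real.sqrt k * ∫ s in Ioi (0:ℝ), (1 + s ^ 2) ^ (-(((k:ℝ) + 1) / 2)))) = 1 := by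
    have h1 := key univ MeasurableSet.univ
    rw [hprob.measure_univ] at h1
    simp only [ENNReal.toReal_one] at h1
    rw [MeasureTheory.setIntegral_univ, MeasureTheory.integral_const_mul] at h1
    have hsplit : (∫ t : ℝ, (1 + t ^ 2 / (k:ℝ)) ^ (-(((k:ℝ) + 1) / 2)))
        = 2 * ∫ t in Ioi (0:ℝ), (1 + t ^ 2 / (k:ℝ)) ^ (-(((k:ℝ) + 1) / 2)) := by
      rw [← MeasureTheory.setIntegral_univ, ← Iic_union_Ioi (a := (0:ℝ)),
        setIntegral_union (Iic_disjoint_Ioi le_rfl) measurableSet_Ioi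
          hFint.integrableOn hFint.integrableOn]
      have := st_F_symm k 0
      rw [neg_zero] at this
      rw [this]
      ring
    rw [hsplit] at h1
    have hcomp := st_F_comp_Ioi k hk 0
    rw [mul_zero] at hcomp
    rw [hcomp] at h1
    linarith [h1]
  set G := ∫ s in Ioi (0:ℝ), (1 + s ^ 2) ^ (-(((k:ℝ) + 1) / 2)) with hGdef
  have hG2' : G * Real.sqrt k ≤ 2 := (le_div_iff₀ hsk).mp hG2
  have hG1' : 1 ≤ G * (8 * Real.sqrt k) := (div_le_iff₀ (by positivity)).mp hG1
  have hck4 : ck ≤ 4 := by nlinarith [hnorm, hG1', hck]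
  have hck14 : 1/4 ≤ ck := by nlinarith [hnorm, hG2', hck]
  -- tail
  have hS : MeasurableSet {t : ℝ | Real.sqrt k * b ≤ |t|} := by
    rw [st_set_eq]
    exact measurableSet_Iic.union measurableSet_Ici
  have htail : ((volume.withDensity
        (fun t => ENNReal.ofReal (ck * (1 + t ^ 2 / (k:ℝ)) ^ (-(((k:ℝ) + 1) / 2)))))
          {t : ℝ | Real.sqrt k * b ≤ |t|}).toReal
      = ck * (2 * (Real.sqrt k * ∫ s in Ioi b, (1 + s ^ 2) ^ (-(((k:ℝ) + 1) / 2)))) := by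
    rw [key _ hS, MeasureTheory.integral_const_mul,
      st_tail_integral k hk (by positivity : 0 < Real.sqrt k * b), st_F_comp_Ioi k hk b]
  rw [htail]
  set X : ℝ := (1 + b ^ 2) ^ (-(((k:ℝ) - 1) / 2)) with hXdef
  have hX : 0 < X := Real.rpow_pos_of_pos (st_base_pos b) _
  set T := ∫ s in Ioi b, (1 + s ^ 2) ^ (-(((k:ℝ) + 1) / 2)) with hTdef
  have hTub : T ≤ X / ((k:ℝ) * b) := st_tail_upper k hk hb0
  have hTlb : X / (4 * ((k:ℝ) * b)) ≤ T := st_tail_lower k hk hb0 hkb2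
  have hTnn : 0 ≤ T := le_trans (by positivity) hTlb
  constructor
  · have h1 : (1/4 : ℝ) * (2 * (Real.sqrt k * (X / (4 * ((k:ℝ) * b)))))
        ≤ ck * (2 * (Real.sqrt k * T)) := by
      gcongr
    refine le_trans (le_of_eq ?_) h1
    rw [← hsk2]
    field_simp
    rw [Real.sqrt_sq hsk.le]
    ring
  · have h1 : ck * (2 * (Real.sqrt k * T)) ≤ 4 * (2 * (Real.sqrt k * (X / ((k:ℝ) * b)))) := by
      gcongr
    refine le_trans h1 (le_of_eq ?_)
    rw [← hsk2]
    field_simp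
    rw [Real.sqrt_sq hsk.le]
    ring
end

section
/- For any N ≥ 1 and t > 0, if χ²(N) is a chi-squared random variable with N degrees of freedom, then P(|χ²(N)/N − 1| ≥ t) ≤ 2·exp(−t²·N/(4(1+t))). -/
open MeasureTheory ProbabilityTheory Real
open scoped ENNReal NNReal


lemma gauss_pdf_mul {c : ℝ} (x : ℝ) :
    gaussianPDFReal 0 1 x * Real.exp (c * x ^ 2)
      = (Real.sqrt (2 * π))⁻¹ * Real.exp (-(1/2 - c) * x ^ 2) := by
  simp only [gaussianPDFReal, NNReal.coe_one, mul_one, sub_zero]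
  rw [mul_assoc, ← Real.exp_add]
  congr 1
  ring

lemma gauss_sq_integrable {c : ℝ} (hc : c < 1/2) :
    Integrable (fun x => Real.exp (c * x ^ 2)) (gaussianReal 0 1) := by
  have hb : (0:ℝ) < 1/2 - c := by linarith
  rw [gaussianReal_of_var_ne_zero _ one_ne_zero, gaussianPDF_def]
  have hmeas : Measurable fun x : ℝ => (gaussianPDFReal 0 1 x).toNNReal :=
    (measurable_gaussianPDFReal 0 1).real_toNNReal
  rw [show (fun x : ℝ => ENNReal.ofReal (gaussianPDFReal 0 1 x))
      = (fun x : ℝ => ((gaussianPDFReal 0 1 x).toNNReal : ℝ≥0∞)) from rfl]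
  rw [integrable_withDensity_iff_integrable_smul hmeas]
  have : (fun x : ℝ => (gaussianPDFReal 0 1 x).toNNReal • Real.exp (c * x ^ 2))
      = fun x : ℝ => (Real.sqrt (2 * π))⁻¹ * Real.exp (-(1/2 - c) * x ^ 2) := by
    funext x
    have h0 : 0 ≤ gaussianPDFReal 0 1 x := gaussianPDFReal_nonneg _ _ _
    simp only [NNReal.smul_def, smul_eq_mul, Real.coe_toNNReal _ h0]
    exact gauss_pdf_mul x
  rw [this]
  exact (integrable_exp_neg_mul_sq hb).const_mul _

lemma gauss_sq_integral {c : ℝ} (hc : c < 1/2) :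
    ∫ x, Real.exp (c * x ^ 2) ∂(gaussianReal 0 1) = (Real.sqrt (1 - 2*c))⁻¹ := by
  have hb : (0:ℝ) < 1/2 - c := by linarith
  rw [gaussianReal_of_var_ne_zero _ one_ne_zero, gaussianPDF_def]
  have hmeas : Measurable fun x : ℝ => (gaussianPDFReal 0 1 x).toNNReal :=
    (measurable_gaussianPDFReal 0 1).real_toNNReal
  rw [show (fun x : ℝ => ENNReal.ofReal (gaussianPDFReal 0 1 x))
      = (fun x : ℝ => ((gaussianPDFReal 0 1 x).toNNReal : ℝ≥0∞)) from rfl]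
  rw [integral_withDensity_eq_integral_smul hmeas]
  have heq : (fun x : ℝ => (gaussianPDFReal 0 1 x).toNNReal • Real.exp (c * x ^ 2))
      = fun x : ℝ => (Real.sqrt (2 * π))⁻¹ * Real.exp (-(1/2 - c) * x ^ 2) := by
    funext x
    have h0 : 0 ≤ gaussianPDFReal 0 1 x := gaussianPDFReal_nonneg _ _ _
    simp only [NNReal.smul_def, smul_eq_mul, Real.coe_toNNReal _ h0]
    exact gauss_pdf_mul x
  rw [heq, integral_const_mul, integral_gaussian]
  rw [← Real.sqrt_inv, ← Real.sqrt_inv, ← Real.sqrt_mul (by positivity)]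
  congr 1
  have hπ : π ≠ 0 := Real.pi_ne_zero
  have h1 : (1:ℝ)/2 - c ≠ 0 := ne_of_gt hb
  have h2 : (1:ℝ) - 2*c ≠ 0 := by linarith
  field_simp

lemma ineqA {t : ℝ} (ht : 0 < t) :
    1 + t ≤ Real.exp (t - t^2/(2*(1+t))) := by
  have h1t : (0:ℝ) < 1 + t := by linarith
  set x : ℝ := t - t^2/(2*(1+t)) with hx
  have hkey : x + x^2/2 - t = t^4/(8*(1+t)^2) := by
    rw [hx]; field_simp; ring
  have hx0 : 0 ≤ x := by
    rw [hx, sub_nonneg, div_le_iff₀ (by positivity)]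
    nlinarith
  have h2 := Real.quadratic_le_exp_of_nonneg hx0
  have h3 : (0:ℝ) ≤ t^4/(8*(1+t)^2) := by positivity
  linarith

lemma ineqB {t : ℝ} (ht : 0 < t) (ht1 : t < 1) :
    Real.exp (t - t^2 + t^2/(2*(1+t))) ≤ 1 + t := by
  have h1t : (0:ℝ) < 1 + t := by linarith
  set y : ℝ := t - t^2 + t^2/(2*(1+t)) with hy
  have hy0 : 0 ≤ y := by
    rw [hy]
    have : 0 ≤ t^2/(2*(1+t)) := by positivity
    nlinarith
  have hy1 : y ≤ 1 := by
    have : y ≤ t := by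
      rw [hy]
      have h2 : t^2/(2*(1+t)) ≤ t^2 := by
        rw [div_le_iff₀ (by positivity)]; nlinarith
      linarith
    linarith
  have hb := Real.exp_bound' hy0 hy1 (n := 3) (by norm_num)
  have hb' : Real.exp y ≤ 1 + y + y^2/2 + 2/9 * y^3 := by
    refine hb.trans ?_
    rw [Finset.sum_range_succ, Finset.sum_range_succ, Finset.sum_range_succ,
      Finset.sum_range_zero]
    norm_num [Nat.factorial]
    linarith [sq_nonneg y]
  have hkey : t - (y + y^2/2 + 2/9 * y^3)
      = (56/9*t^3 + 61/3*t^4 + 23*t^5 + 46/9*t^6 - 8*t^7 - 8/3*t^8 + 16/9*t^9)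
        / (8*(1+t)^3) := by
    rw [hy]; field_simp; ring
  have hpos : 0 ≤ 56/9*t^3 + 61/3*t^4 + 23*t^5 + 46/9*t^6 - 8*t^7 - 8/3*t^8 + 16/9*t^9 := by
    have h7 : t^7 ≤ t^5 := pow_le_pow_of_le_one ht.le ht1.le (by norm_num)
    have h8 : t^8 ≤ t^5 := pow_le_pow_of_le_one ht.le ht1.le (by norm_num)
    linarith [pow_pos ht 3, pow_pos ht 4, pow_pos ht 5, pow_pos ht 6, pow_pos ht 9]
  have : 0 ≤ t - (y + y^2/2 + 2/9 * y^3) := by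
    rw [hkey]; positivity
  linarith

lemma int_exp_sq {Ω : Type*} [MeasurableSpace Ω] {P : Measure Ω} {X : Ω → ℝ}
    (hX : Measurable X) (hmap : Measure.map X P = gaussianReal 0 1)
    {c : ℝ} (hc : c < 1/2) :
    Integrable (fun ω => Real.exp (c * X ω ^ 2)) P := by
  have h := gauss_sq_integrable hc
  rw [← hmap] at h
  have hf : AEStronglyMeasurable (fun x : ℝ => Real.exp (c * x ^ 2)) (Measure.map X P) :=
    (((measurable_id.pow_const 2).const_mul c).exp).aestronglyMeasurable
  exact (integrable_map_measure hf hX.aemeasurable).mp h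

lemma mgf_sq_gauss {Ω : Type*} [MeasurableSpace Ω] {P : Measure Ω} {X : Ω → ℝ}
    (hX : Measurable X) (hmap : Measure.map X P = gaussianReal 0 1)
    {c : ℝ} (hc : c < 1/2) :
    mgf (fun ω => X ω ^ 2) P c = (Real.sqrt (1 - 2*c))⁻¹ := by
  have hf : AEStronglyMeasurable (fun x : ℝ => Real.exp (c * x ^ 2)) (Measure.map X P) :=
    (((measurable_id.pow_const 2).const_mul c).exp).aestronglyMeasurable
  have h1 : mgf (fun ω => X ω ^ 2) P c = ∫ ω, Real.exp (c * X ω ^ 2) ∂P := rfl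
  rw [h1, ← integral_map hX.aemeasurable hf, hmap]
  exact gauss_sq_integral hc

/-- Concentration of a chi-squared random variable with `N` degrees of
freedom, written as the sum of squares of `N` i.i.d. standard Gaussians. -/
theorem chi_squared_concentration
    {Ω : Type*} [MeasurableSpace Ω] (P : Measure Ω) [IsProbabilityMeasure P]
    (N : ℕ) (hN : 1 ≤ N) (g : Fin N → Ω → ℝ)
    (hmeas : ∀ i, Measurable (g i))
    (hindep : iIndepFun g P)
    (hgauss : ∀ i, Measure.map (g i) P = gaussianReal 0 1)
    (t : ℝ) (ht : 0 < t) :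
    P {ω | t ≤ |(∑ i, (g i ω) ^ 2) / (N : ℝ) - 1|}
      ≤ ENNReal.ofReal (2 * Real.exp (-(t ^ 2 * (N : ℝ)) / (4 * (1 + t)))) := by
  have hNpos : (0:ℝ) < N := by exact_mod_cast Nat.pos_of_ne_zero (by omega)
  have h1t : (0:ℝ) < 1 + t := by linarith
  set Y : Fin N → Ω → ℝ := fun i ω => g i ω ^ 2 with hY
  have hYmeas : ∀ i, Measurable (Y i) := fun i => (hmeas i).pow_const 2
  have hYindep : iIndepFun Y P :=
    hindep.comp (fun _ x => x ^ 2) (fun _ => measurable_id.pow_const 2)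
  set S : Ω → ℝ := fun ω => ∑ i, Y i ω with hSdef
  have hSeq : (∑ i, Y i) = S := by
    funext ω; simp [hSdef, Finset.sum_apply]
  have hSval : ∀ ω, S ω = ∑ i, g i ω ^ 2 := fun ω => rfl
  -- integrability of exp(c * S)
  have hintS : ∀ c : ℝ, c < 1/2 → Integrable (fun ω => Real.exp (c * S ω)) P := by
    intro c hc
    have := hYindep.integrable_exp_mul_sum (t := c) (s := Finset.univ) hYmeas
      (fun i _ => int_exp_sq (hmeas i) (hgauss i) hc)
    rwa [hSeq] at this
  -- mgf of S
  have hmgfS : ∀ c : ℝ, c < 1/2 → mgf S P c = ((Real.sqrt (1 - 2*c))⁻¹)^N := by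
    intro c hc
    rw [← hSeq, hYindep.mgf_sum hYmeas]
    rw [Finset.prod_congr rfl (fun i _ => mgf_sq_gauss (hmeas i) (hgauss i) hc),
      Finset.prod_const, Finset.card_univ, Fintype.card_fin]
  set D : ℝ := -(t ^ 2 * (N : ℝ)) / (4 * (1 + t)) with hD
  -- upper tail
  have hup : P {ω | (N:ℝ)*(1+t) ≤ S ω} ≤ ENNReal.ofReal (Real.exp D) := by
    set c : ℝ := t / (2*(1+t)) with hc
    have hc2 : c < 1/2 := by
      rw [hc, div_lt_iff₀ (by positivity)]; linarith
    have hc0 : 0 ≤ c := by positivity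
    have h1 := measure_ge_le_exp_mul_mgf (μ := P) (X := S) ((N:ℝ)*(1+t)) hc0 (hintS c hc2)
    rw [hmgfS c hc2] at h1
    have h1mc : 1 - 2*c = (1+t)⁻¹ := by
      rw [hc]; field_simp; ring
    have hsq : (Real.sqrt (1 - 2*c))⁻¹ = Real.sqrt (1+t) := by
      rw [h1mc, Real.sqrt_inv, inv_inv]
    rw [hsq] at h1
    have hce : -c * ((N:ℝ)*(1+t)) = (-(t/2)) * N := by
      rw [hc]; field_simp
    rw [hce] at h1
    have hA : Real.sqrt (1+t) ≤ Real.exp (t/2 - t^2/(4*(1+t))) := by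
      rw [show Real.exp (t/2 - t^2/(4*(1+t)))
          = Real.sqrt (Real.exp (t/2 - t^2/(4*(1+t))) ^ 2) from
        (Real.sqrt_sq (Real.exp_pos _).le).symm]
      apply Real.sqrt_le_sqrt
      rw [← Real.exp_nat_mul]
      have hne : (1:ℝ)+t ≠ 0 := ne_of_gt h1t
      rw [show ((2:ℕ):ℝ) * (t/2 - t^2/(4*(1+t))) = t - t^2/(2*(1+t)) by
        push_cast; field_simp; ring]
      exact ineqA ht
    have hexpN : (Real.sqrt (1+t))^N ≤ Real.exp ((N:ℝ) * (t/2 - t^2/(4*(1+t)))) := by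
      rw [Real.exp_nat_mul]
      exact pow_le_pow_left₀ (Real.sqrt_nonneg _) hA N
    have hfinal : Real.exp (-(t/2) * N) * (Real.sqrt (1+t))^N ≤ Real.exp D := by
      calc Real.exp (-(t/2) * N) * (Real.sqrt (1+t))^N
          ≤ Real.exp (-(t/2) * N) * Real.exp ((N:ℝ) * (t/2 - t^2/(4*(1+t)))) := by
            exact mul_le_mul_of_nonneg_left hexpN (Real.exp_pos _).le
        _ = Real.exp D := by
            rw [← Real.exp_add, hD]; congr 1; field_simp; ring
    calc P {ω | (N:ℝ)*(1+t) ≤ S ω}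
        = ENNReal.ofReal ((P {ω | (N:ℝ)*(1+t) ≤ S ω}).toReal) :=
          (ENNReal.ofReal_toReal (measure_ne_top _ _)).symm
      _ ≤ ENNReal.ofReal (Real.exp D) :=
          ENNReal.ofReal_le_ofReal (h1.trans hfinal)
  -- lower tail
  have hlow : P {ω | S ω ≤ (N:ℝ)*(1-t)} ≤ ENNReal.ofReal (Real.exp D) := by
    by_cases ht1 : t < 1
    · set c : ℝ := -(t/2) with hc
      have hc2 : c < 1/2 := by rw [hc]; linarith
      have hc0 : c ≤ 0 := by rw [hc]; linarith
      have h1 := measure_le_le_exp_mul_mgf (μ := P) (X := S) ((N:ℝ)*(1-t)) hc0 (hintS c hc2)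
      rw [hmgfS c hc2] at h1
      have h1mc : 1 - 2*c = 1+t := by rw [hc]; ring
      rw [h1mc] at h1
      have hce : -c * ((N:ℝ)*(1-t)) = (N:ℝ) * (t*(1-t)/2) := by rw [hc]; ring
      rw [hce] at h1
      have hsp : 0 < Real.sqrt (1+t) := Real.sqrt_pos.mpr h1t
      have hBs : Real.exp (t*(1-t)/2 + t^2/(4*(1+t))) ≤ Real.sqrt (1+t) := by
        rw [show Real.exp (t*(1-t)/2 + t^2/(4*(1+t)))
            = Real.sqrt (Real.exp (t*(1-t)/2 + t^2/(4*(1+t))) ^ 2) from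
          (Real.sqrt_sq (Real.exp_pos _).le).symm]
        apply Real.sqrt_le_sqrt
        rw [← Real.exp_nat_mul]
        have hne : (1:ℝ)+t ≠ 0 := ne_of_gt h1t
        rw [show ((2:ℕ):ℝ) * (t*(1-t)/2 + t^2/(4*(1+t))) = t - t^2 + t^2/(2*(1+t)) by
          push_cast; field_simp; ring]
        exact ineqB ht ht1
      have hper : Real.exp (t*(1-t)/2) * (Real.sqrt (1+t))⁻¹
          ≤ Real.exp (-(t^2)/(4*(1+t))) := by
        rw [← div_eq_mul_inv, div_le_iff₀ hsp]
        calc Real.exp (t*(1-t)/2)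
            = Real.exp (-(t^2)/(4*(1+t))) * Real.exp (t*(1-t)/2 + t^2/(4*(1+t))) := by
              rw [← Real.exp_add]; congr 1; ring
          _ ≤ Real.exp (-(t^2)/(4*(1+t))) * Real.sqrt (1+t) :=
              mul_le_mul_of_nonneg_left hBs (Real.exp_pos _).le
      have hfinal : Real.exp ((N:ℝ) * (t*(1-t)/2)) * ((Real.sqrt (1+t))⁻¹)^N
          ≤ Real.exp D := by
        calc Real.exp ((N:ℝ) * (t*(1-t)/2)) * ((Real.sqrt (1+t))⁻¹)^N
            = (Real.exp (t*(1-t)/2) * (Real.sqrt (1+t))⁻¹)^N := by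
              rw [Real.exp_nat_mul, mul_pow]
          _ ≤ (Real.exp (-(t^2)/(4*(1+t))))^N := by
              apply pow_le_pow_left₀ (by positivity) hper
          _ = Real.exp D := by
              rw [← Real.exp_nat_mul, hD]; congr 1; field_simp
      calc P {ω | S ω ≤ (N:ℝ)*(1-t)}
          = ENNReal.ofReal ((P {ω | S ω ≤ (N:ℝ)*(1-t)}).toReal) :=
            (ENNReal.ofReal_toReal (measure_ne_top _ _)).symm
        _ ≤ ENNReal.ofReal (Real.exp D) :=
            ENNReal.ofReal_le_ofReal (h1.trans hfinal)
    · push_neg at ht1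
      have hzero : P {ω | S ω ≤ (N:ℝ)*(1-t)} = 0 := by
        have hsub0 : {ω | S ω ≤ (N:ℝ)*(1-t)} ⊆ g ⟨0, hN⟩ ⁻¹' {0} := by
          intro ω hω
          simp only [Set.mem_setOf_eq] at hω
          have h1 : Y ⟨0, hN⟩ ω ≤ S ω :=
            Finset.single_le_sum (f := fun i => Y i ω) (fun i _ => sq_nonneg _)
              (Finset.mem_univ _)
          have h2 : (N:ℝ)*(1-t) ≤ 0 := by nlinarith
          have h3 : g ⟨0, hN⟩ ω ^ 2 ≤ 0 := by
            calc g ⟨0, hN⟩ ω ^ 2 = Y ⟨0, hN⟩ ω := rfl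
              _ ≤ 0 := by linarith
          have h4 : g ⟨0, hN⟩ ω = 0 :=
            sq_eq_zero_iff.mp (le_antisymm h3 (sq_nonneg _))
          simpa using h4
        refine measure_mono_null hsub0 ?_
        have hm := Measure.map_apply (μ := P) (hmeas ⟨0, hN⟩) (measurableSet_singleton (0:ℝ))
        rw [hgauss] at hm
        rw [← hm]
        exact gaussianReal_absolutelyContinuous 0 one_ne_zero Real.volume_singleton
      rw [hzero]
      exact zero_le'
  -- combine
  have hsub : {ω | t ≤ |(∑ i, (g i ω) ^ 2) / (N : ℝ) - 1|}
      ⊆ {ω | (N:ℝ)*(1+t) ≤ S ω} ∪ {ω | S ω ≤ (N:ℝ)*(1-t)} := by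
    intro ω hω
    simp only [Set.mem_setOf_eq] at hω
    have hS : S ω = ∑ i, g i ω ^ 2 := hSval ω
    rcases le_abs.mp hω with h | h
    · left
      simp only [Set.mem_setOf_eq, hS]
      rw [le_sub_iff_add_le, le_div_iff₀ hNpos] at h
      linarith
    · right
      simp only [Set.mem_setOf_eq, hS]
      rw [le_neg, sub_le_iff_le_add, div_le_iff₀ hNpos] at h
      linarith
  calc P {ω | t ≤ |(∑ i, (g i ω) ^ 2) / (N : ℝ) - 1|}
      ≤ P ({ω | (N:ℝ)*(1+t) ≤ S ω} ∪ {ω | S ω ≤ (N:ℝ)*(1-t)}) := measure_mono hsub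
    _ ≤ P {ω | (N:ℝ)*(1+t) ≤ S ω} + P {ω | S ω ≤ (N:ℝ)*(1-t)} := measure_union_le _ _
    _ ≤ ENNReal.ofReal (Real.exp D) + ENNReal.ofReal (Real.exp D) := add_le_add hup hlow
    _ = ENNReal.ofReal (2 * Real.exp D) := by
        rw [← ENNReal.ofReal_add (Real.exp_pos _).le (Real.exp_pos _).le, two_mul]
    _ = ENNReal.ofReal (2 * Real.exp (-(t ^ 2 * (N : ℝ)) / (4 * (1 + t)))) := by rw [hD]
end

section
/- Let ε be a standard Gaussian random variable and ζ ~ N(0, I_{n}) independent of ε. Let t(u) = a‖u‖/2 + σ²·log(p/s − 1)/(a‖u‖) for u ∈ ℝⁿ, where a, σ > 0 and s < p/2. Then (p − s)·P(σε ≥ t(ζ)) ≤ √(s(p−s))·exp(−(n/2)·log(1 + a²/(4σ²))). -/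
open MeasureTheory ProbabilityTheory Real

lemma gaussian_tail {c : ℝ} (hc : 0 ≤ c) :
    gaussianReal 0 1 {x | c ≤ x} ≤ ENNReal.ofReal (Real.exp (-c ^ 2 / 2)) := by
  rw [gaussianReal_apply 0 one_ne_zero]
  have hmono : ∀ x ∈ {x : ℝ | c ≤ x}, gaussianPDF 0 1 x ≤
      ENNReal.ofReal (Real.exp (-c ^ 2 / 2) * gaussianPDFReal c 1 x) := by
    intro x hx
    simp only [Set.mem_setOf_eq] at hx
    rw [gaussianPDF]
    apply ENNReal.ofReal_le_ofReal
    simp only [gaussianPDFReal, NNReal.coe_one, mul_one]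
    have hexp : rexp (-(x - 0) ^ 2 / 2) ≤ rexp (-c ^ 2 / 2) * rexp (-(x - c) ^ 2 / 2) := by
      rw [← Real.exp_add, Real.exp_le_exp]
      nlinarith [mul_nonneg hc (sub_nonneg.mpr hx)]
    calc (√(2 * π))⁻¹ * rexp (-(x - 0) ^ 2 / 2)
        ≤ (√(2 * π))⁻¹ * (rexp (-c ^ 2 / 2) * rexp (-(x - c) ^ 2 / 2)) :=
          mul_le_mul_of_nonneg_left hexp (by positivity)
      _ = rexp (-c ^ 2 / 2) * ((√(2 * π))⁻¹ * rexp (-(x - c) ^ 2 / 2)) := by ring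
  calc ∫⁻ x in {x | c ≤ x}, gaussianPDF 0 1 x
      ≤ ∫⁻ x in {x | c ≤ x}, ENNReal.ofReal (Real.exp (-c ^ 2 / 2) * gaussianPDFReal c 1 x) := by
        apply setLIntegral_mono ((measurable_gaussianPDFReal c 1).const_mul _).ennreal_ofReal hmono
    _ ≤ ∫⁻ x, ENNReal.ofReal (Real.exp (-c ^ 2 / 2) * gaussianPDFReal c 1 x) :=
        setLIntegral_le_lintegral _ _
    _ = ENNReal.ofReal (Real.exp (-c ^ 2 / 2)) *
          ∫⁻ x, ENNReal.ofReal (gaussianPDFReal c 1 x) := by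
        simp_rw [ENNReal.ofReal_mul (Real.exp_nonneg _)]
        rw [lintegral_const_mul _ (measurable_gaussianPDFReal c 1).ennreal_ofReal]
    _ = ENNReal.ofReal (Real.exp (-c ^ 2 / 2)) := by
        rw [lintegral_gaussianPDFReal_eq_one c one_ne_zero, mul_one]
open scoped ENNReal NNReal

lemma gaussian_lint_exp {c : ℝ} (hc : 0 ≤ c) :
    ∫⁻ x, ENNReal.ofReal (Real.exp (-c * x ^ 2)) ∂(gaussianReal 0 1)
      = ENNReal.ofReal (1 / Real.sqrt (1 + 2 * c)) := by
  have hb : (0:ℝ) < c + 1/2 := by linarith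
  rw [gaussianReal_of_var_ne_zero 0 one_ne_zero,
    lintegral_withDensity_eq_lintegral_mul _ (measurable_gaussianPDF 0 1)
      (by fun_prop)]
  have heq : ∀ x : ℝ, (gaussianPDF 0 1 * fun x => ENNReal.ofReal (Real.exp (-c * x ^ 2))) x
      = ENNReal.ofReal ((√(2 * π))⁻¹ * Real.exp (-(c + 1/2) * x ^ 2)) := by
    intro x
    simp only [Pi.mul_apply, gaussianPDF, gaussianPDFReal, NNReal.coe_one, mul_one]
    rw [← ENNReal.ofReal_mul (by positivity)]
    congr 1
    rw [mul_assoc, ← Real.exp_add]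
    ring_nf
  simp_rw [heq]
  rw [← ofReal_integral_eq_lintegral_ofReal
      (((integrable_exp_neg_mul_sq hb).const_mul _)) (ae_of_all _ fun x => by positivity)]
  congr 1
  rw [integral_const_mul, integral_gaussian]
  have h2 : √(2 * π) = √2 * √π := Real.sqrt_mul (by norm_num) π
  have h3 : √(1 + 2 * c) = √2 * √(c + 1/2) := by
    rw [← Real.sqrt_mul (by norm_num : (0:ℝ) ≤ 2)]
    congr 1; ring
  have hπ : (0:ℝ) < √π := Real.sqrt_pos.mpr Real.pi_pos
  have h2p : (0:ℝ) < √2 := Real.sqrt_pos.mpr (by norm_num)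
  have hcp : (0:ℝ) < √(c + 1/2) := Real.sqrt_pos.mpr hb
  rw [Real.sqrt_div Real.pi_pos.le, h2, h3]
  field_simp

lemma lintegral_pi_pow {n : ℕ} (ν : Measure ℝ) [IsProbabilityMeasure ν] (f : ℝ → ℝ≥0∞)
    (hf : Measurable f) :
    ∫⁻ u : Fin n → ℝ, ∏ i, f (u i) ∂(Measure.pi fun _ => ν) = (∫⁻ x, f x ∂ν) ^ n := by
  induction n with
  | zero => simp
  | succ n ih =>
    have hmp := measurePreserving_piFinSuccAbove (fun _ : Fin (n + 1) => ν) 0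
    have hG : Measurable fun z : ℝ × (Fin n → ℝ) => f z.1 * ∏ i, f (z.2 i) :=
      (hf.comp measurable_fst).mul
        (Finset.measurable_prod _ fun i _ =>
          hf.comp ((measurable_pi_apply i).comp measurable_snd))
    calc ∫⁻ u : Fin (n + 1) → ℝ, ∏ i, f (u i) ∂(Measure.pi fun _ => ν)
        = ∫⁻ u : Fin (n + 1) → ℝ,
            (fun z : ℝ × (Fin n → ℝ) => f z.1 * ∏ i, f (z.2 i))
              (MeasurableEquiv.piFinSuccAbove (fun _ => ℝ) 0 u) ∂(Measure.pi fun _ => ν) := by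
          refine lintegral_congr fun u => ?_
          simp [MeasurableEquiv.piFinSuccAbove, Fin.prod_univ_succ, Fin.succAbove, Fin.tail]
      _ = ∫⁻ z : ℝ × (Fin n → ℝ), f z.1 * ∏ i, f (z.2 i)
            ∂(ν.prod (Measure.pi fun _ => ν)) := hmp.lintegral_comp hG
      _ = (∫⁻ x, f x ∂ν) * ∫⁻ v : Fin n → ℝ, ∏ i, f (v i) ∂(Measure.pi fun _ => ν) :=
          lintegral_prod_mul hf.aemeasurable
            (Finset.measurable_prod _ fun i _ => hf.comp (measurable_pi_apply i)).aemeasurable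
      _ = (∫⁻ x, f x ∂ν) ^ (n + 1) := by rw [ih, pow_succ]; ring

/-- Bound on the first term `(p−s)·P(σε ≥ t(ζ))` of `ψ`, where
`t(u) = a‖u‖/2 + σ²log(p/s−1)/(a‖u‖)`, `ε` standard Gaussian and `ζ` an
independent standard Gaussian vector in `ℝⁿ`. -/
theorem psi_first_term_bound
    {Ω : Type*} [MeasurableSpace Ω] (P : Measure Ω) [IsProbabilityMeasure P]
    (n : ℕ) (hn : 0 < n) (ε : Ω → ℝ) (ζ : Ω → Fin n → ℝ)
    (hεm : Measurable ε) (hζm : Measurable ζ)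
    (hε : Measure.map ε P = gaussianReal 0 1)
    (hζ : Measure.map ζ P = Measure.pi fun _ => gaussianReal 0 1)
    (hindep : IndepFun ε ζ P)
    (a σ : ℝ) (ha : 0 < a) (hσ : 0 < σ)
    (s p : ℕ) (hs : 0 < s) (hsp : (s : ℝ) < (p : ℝ) / 2) :
    ((p : ℝ) - s) *
        (P {ω | a * Real.sqrt (∑ i, (ζ ω i) ^ 2) / 2
              + σ ^ 2 * Real.log ((p : ℝ) / (s : ℝ) - 1)
                  / (a * Real.sqrt (∑ i, (ζ ω i) ^ 2))
              ≤ σ * ε ω}).toReal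
      ≤ Real.sqrt ((s : ℝ) * ((p : ℝ) - s)) *
          Real.exp (-((n : ℝ) / 2) * Real.log (1 + a ^ 2 / (4 * σ ^ 2))) := by
  set ν : Measure ℝ := gaussianReal 0 1 with hν
  set μ : Measure (Fin n → ℝ) := Measure.pi fun _ => gaussianReal 0 1 with hμ
  set L : ℝ := Real.log ((p : ℝ) / (s : ℝ) - 1) with hLdef
  have hs0 : (0:ℝ) < s := by exact_mod_cast hs
  have hps : (0:ℝ) < (p:ℝ) - s := by linarith
  have hps1 : (1:ℝ) < (p:ℝ)/(s:ℝ) - 1 := by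
    rw [lt_sub_iff_add_lt, lt_div_iff₀ hs0]; linarith
  have hLpos : 0 < L := Real.log_pos hps1
  set c : ℝ := a ^ 2 / (8 * σ ^ 2) with hcdef
  have hc0 : 0 < c := by positivity
  set t : (Fin n → ℝ) → ℝ := fun u =>
    a * Real.sqrt (∑ i, u i ^ 2) / 2 + σ ^ 2 * L / (a * Real.sqrt (∑ i, u i ^ 2)) with htdef
  have hsum_m : Measurable fun u : Fin n → ℝ => ∑ i, u i ^ 2 :=
    Finset.measurable_sum _ fun i _ => (measurable_pi_apply i).pow_const 2
  have htm : Measurable t := by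
    apply Measurable.add
    · exact ((hsum_m.sqrt.const_mul a).div_const 2)
    · exact measurable_const.div (hsum_m.sqrt.const_mul a)
  set S : Set ((Fin n → ℝ) × ℝ) := {q | t q.1 ≤ σ * q.2} with hSdef
  have hSm : MeasurableSet S :=
    measurableSet_le (htm.comp measurable_fst) (measurable_snd.const_mul σ)
  have hmap : Measure.map (fun ω => (ζ ω, ε ω)) P = μ.prod ν := by
    rw [← hζ, ← hε]
    exact (indepFun_iff_map_prod_eq_prod_map_map hζm.aemeasurable hεm.aemeasurable).mp hindep.symm
  have hPA : P {ω | a * Real.sqrt (∑ i, (ζ ω i) ^ 2) / 2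
              + σ ^ 2 * Real.log ((p : ℝ) / (s : ℝ) - 1)
                  / (a * Real.sqrt (∑ i, (ζ ω i) ^ 2))
              ≤ σ * ε ω} = (μ.prod ν) S := by
    rw [← hmap, Measure.map_apply (hζm.prodMk hεm) hSm]
    rfl
  -- a.e. positivity of the norm
  have hae0 : ∀ᵐ u ∂μ, 0 < ∑ i, u i ^ 2 := by
    have hnull : (Measure.pi fun _ : Fin n => gaussianReal 0 1)
        (Function.eval (⟨0, hn⟩ : Fin n) ⁻¹' {0}) = 0 :=
      Measure.pi_eval_preimage_null _
        ((gaussianReal_absolutelyContinuous 0 one_ne_zero)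
          (by simp : (volume : Measure ℝ) {0} = 0))
    rw [ae_iff, hμ]
    refine measure_mono_null (fun u hu => ?_) hnull
    simp only [Set.mem_setOf_eq, not_lt] at hu
    have hsum0 : ∑ i, u i ^ 2 = 0 :=
      le_antisymm hu (Finset.sum_nonneg fun i _ => sq_nonneg _)
    have := (Finset.sum_eq_zero_iff_of_nonneg (fun i _ => sq_nonneg (u i))).mp hsum0
      ⟨0, hn⟩ (Finset.mem_univ _)
    simpa [Set.mem_preimage, Function.eval, pow_eq_zero_iff] using this
  have hae : ∀ᵐ u ∂μ, ν (Prod.mk u ⁻¹' S) ≤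
      ENNReal.ofReal (Real.exp (-L / 2)) * ENNReal.ofReal (Real.exp (-c * ∑ i, u i ^ 2)) := by
    filter_upwards [hae0] with u hu
    set R : ℝ := ∑ i, u i ^ 2 with hRdef
    have hrpos : 0 < Real.sqrt R := Real.sqrt_pos.mpr hu
    have hr2 : Real.sqrt R ^ 2 = R := Real.sq_sqrt hu.le
    have htpos : 0 < t u := by
      rw [htdef]
      have h1 : 0 < a * Real.sqrt R / 2 := by positivity
      have h2 : 0 < σ ^ 2 * L / (a * Real.sqrt R) := by positivity
      exact add_pos h1 h2
    have hset : Prod.mk u ⁻¹' S = {x | t u / σ ≤ x} := by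
      ext x
      simp only [Set.mem_preimage, hSdef, Set.mem_setOf_eq, div_le_iff₀ hσ]
      rw [mul_comm]
    rw [hset]
    refine le_trans (gaussian_tail (div_nonneg htpos.le hσ.le)) ?_
    rw [← ENNReal.ofReal_mul (Real.exp_nonneg _), ← Real.exp_add]
    apply ENNReal.ofReal_le_ofReal
    rw [Real.exp_le_exp]
    -- key inequality
    have h3 : a ^ 2 * R / 4 + σ ^ 2 * L ≤ t u ^ 2 := by
      have hexp : t u ^ 2 = (a * Real.sqrt R / 2) ^ 2
          + 2 * (a * Real.sqrt R / 2) * (σ ^ 2 * L / (a * Real.sqrt R))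
          + (σ ^ 2 * L / (a * Real.sqrt R)) ^ 2 := by rw [htdef]; ring
      have hcross : 2 * (a * Real.sqrt R / 2) * (σ ^ 2 * L / (a * Real.sqrt R)) = σ ^ 2 * L := by
        field_simp
      nlinarith [sq_nonneg (σ ^ 2 * L / (a * Real.sqrt R)), hr2]
    have h4 : c * (8 * σ ^ 2) = a ^ 2 := by
      rw [hcdef]; field_simp
    have h5 : c * (8 * σ ^ 2) * R = a ^ 2 * R := by rw [h4]
    have key : L / 2 + c * R ≤ (t u / σ) ^ 2 / 2 := by
      rw [div_pow, div_div, le_div_iff₀ (by positivity : (0:ℝ) < σ ^ 2 * 2)]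
      nlinarith [h3, h5]
    linarith [key]
  -- putting it together
  have hbound : (μ.prod ν) S ≤ ENNReal.ofReal (Real.exp (-L / 2)) *
      ENNReal.ofReal ((1 / Real.sqrt (1 + 2 * c)) ^ n) := by
    rw [Measure.prod_apply hSm]
    calc ∫⁻ u, ν (Prod.mk u ⁻¹' S) ∂μ
        ≤ ∫⁻ u, ENNReal.ofReal (Real.exp (-L / 2))
            * ENNReal.ofReal (Real.exp (-c * ∑ i, u i ^ 2)) ∂μ := lintegral_mono_ae hae
      _ = ENNReal.ofReal (Real.exp (-L / 2))
            * ∫⁻ u, ENNReal.ofReal (Real.exp (-c * ∑ i, u i ^ 2)) ∂μ :=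
          lintegral_const_mul _ ((hsum_m.const_mul (-c)).exp.ennreal_ofReal)
      _ = ENNReal.ofReal (Real.exp (-L / 2)) * ENNReal.ofReal ((1 / Real.sqrt (1 + 2 * c)) ^ n) := by
          congr 1
          have hsplit : ∀ u : Fin n → ℝ, ENNReal.ofReal (Real.exp (-c * ∑ i, u i ^ 2))
              = ∏ i, ENNReal.ofReal (Real.exp (-c * u i ^ 2)) := by
            intro u
            have hms : -c * ∑ i, u i ^ 2 = ∑ i, (-c * u i ^ 2) := Finset.mul_sum _ _ _
            rw [hms, Real.exp_sum, ← ENNReal.ofReal_prod_of_nonneg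
              (fun i _ => (Real.exp_pos _).le)]
          simp_rw [hsplit]
          rw [hμ, lintegral_pi_pow (gaussianReal 0 1)
              (fun x => ENNReal.ofReal (Real.exp (-c * x ^ 2))) (by fun_prop),
            gaussian_lint_exp hc0.le, ← ENNReal.ofReal_pow (by positivity)]
  rw [hPA]
  have hfin : ENNReal.ofReal (Real.exp (-L / 2)) *
      ENNReal.ofReal ((1 / Real.sqrt (1 + 2 * c)) ^ n) ≠ ⊤ := by
    exact ENNReal.mul_ne_top ENNReal.ofReal_ne_top ENNReal.ofReal_ne_top
  have htoReal : ((μ.prod ν) S).toReal ≤ Real.exp (-L / 2) * (1 / Real.sqrt (1 + 2 * c)) ^ n := by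
    refine le_trans (ENNReal.toReal_mono hfin hbound) ?_
    rw [ENNReal.toReal_mul, ENNReal.toReal_ofReal (Real.exp_nonneg _),
      ENNReal.toReal_ofReal (by positivity)]
  refine le_trans (mul_le_mul_of_nonneg_left htoReal hps.le) (le_of_eq ?_)
  -- final arithmetic
  have hy : (0:ℝ) < 1 + 2 * c := by linarith
  have h2c : 1 + 2 * c = 1 + a ^ 2 / (4 * σ ^ 2) := by rw [hcdef]; field_simp; ring
  have hgen : ∀ y : ℝ, 0 < y → Real.sqrt y = Real.exp (Real.log y * (1/2)) := fun y hy0 => by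
    rw [Real.sqrt_eq_rpow, Real.rpow_def_of_pos hy0]
  have hsqrt_exp : Real.sqrt (1 + 2 * c) = Real.exp (Real.log (1 + 2 * c) * (1/2)) :=
    hgen _ hy
  have hpow : (1 / Real.sqrt (1 + 2 * c)) ^ n
      = Real.exp (-((n : ℝ) / 2) * Real.log (1 + a ^ 2 / (4 * σ ^ 2))) := by
    rw [hsqrt_exp, ← h2c, one_div, ← Real.exp_neg, ← Real.exp_nat_mul]
    congr 1
    ring
  have hexpL : Real.exp (-L / 2) = Real.sqrt (s : ℝ) / Real.sqrt ((p:ℝ) - s) := by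
    have hfrac : (p:ℝ)/(s:ℝ) - 1 = ((p:ℝ) - s) / s := by field_simp
    have : Real.sqrt ((p:ℝ)/(s:ℝ) - 1) = Real.exp (L * (1/2)) := by
      rw [hgen _ (by linarith), hLdef]
    rw [show -L/2 = -(L * (1/2)) by ring, Real.exp_neg, ← this, hfrac,
      Real.sqrt_div hps.le, inv_div]
  rw [hpow, hexpL, ← mul_assoc, Real.sqrt_mul hs0.le]
  congr 1
  rw [mul_comm, div_mul_eq_mul_div, div_eq_iff (ne_of_gt (Real.sqrt_pos.mpr hps)),
    mul_assoc, Real.mul_self_sqrt hps.le]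
end

section
/- Let ε be a standard Gaussian random variable and ζ ~ N(0, I_n) independent of ε, with t(u) = a‖u‖/2 + σ²·log(p/s−1)/(a‖u‖) for a, σ > 0, s < p/2. Then s·P({σε ≥ a‖ζ‖ − t(ζ)} ∩ {a‖ζ‖ ≥ t(ζ)}) ≤ √(s(p−s))·exp(−(n/2)·log(1 + a²/(4σ²))). -/
open MeasureTheory ProbabilityTheory Real


lemma gpdf_eq (x : ℝ) : gaussianPDFReal 0 1 x = (Real.sqrt (2 * π))⁻¹ * rexp (-x ^ 2 / 2) := by
  simp [gaussianPDFReal]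

lemma exp_mul_gpdf (y x : ℝ) :
    rexp (y * x) * gaussianPDFReal 0 1 x
      = (Real.sqrt (2 * π))⁻¹ * rexp (y ^ 2 / 2) * rexp (-(1/2) * (x - y) ^ 2) := by
  rw [gpdf_eq]
  rw [mul_comm (rexp (y*x)), mul_assoc, mul_assoc, ← Real.exp_add, ← Real.exp_add]
  congr 1
  ring

lemma integrable_exp_mul_gpdf (y : ℝ) :
    Integrable (fun x => rexp (y * x) * gaussianPDFReal 0 1 x) := by
  simp_rw [exp_mul_gpdf]
  exact ((integrable_exp_neg_mul_sq (by norm_num : (0:ℝ) < 1/2)).comp_sub_right y).const_mul _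

lemma integral_exp_mul_gpdf (y : ℝ) :
    ∫ x, rexp (y * x) * gaussianPDFReal 0 1 x = rexp (y ^ 2 / 2) := by
  simp_rw [exp_mul_gpdf]
  rw [MeasureTheory.integral_const_mul,
    integral_sub_right_eq_self (μ := volume) (fun x => rexp (-(1/2) * x ^ 2)) y,
    integral_gaussian]
  have h2 : (π / (1/2) : ℝ) = 2 * π := by ring
  rw [h2]
  have hπ : Real.sqrt (2 * π) ≠ 0 := by positivity
  field_simp

lemma gauss_tail {y : ℝ} (hy : 0 ≤ y) :
    gaussianReal 0 1 {x | y ≤ x} ≤ ENNReal.ofReal (rexp (-(y ^ 2) / 2)) := by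
  rw [gaussianReal_apply_eq_integral 0 one_ne_zero]
  refine ENNReal.ofReal_le_ofReal ?_
  have hint : Integrable (fun x => rexp (y * (x - y)) * gaussianPDFReal 0 1 x) := by
    have : (fun x => rexp (y * (x - y)) * gaussianPDFReal 0 1 x)
        = fun x => rexp (-(y^2)) * (rexp (y * x) * gaussianPDFReal 0 1 x) := by
      ext x; rw [← mul_assoc, ← Real.exp_add]; ring_nf
    rw [this]
    exact (integrable_exp_mul_gpdf y).const_mul _
  calc ∫ x in {x | y ≤ x}, gaussianPDFReal 0 1 x
      ≤ ∫ x in {x | y ≤ x}, rexp (y * (x - y)) * gaussianPDFReal 0 1 x := by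
        refine setIntegral_mono_on ((integrable_gaussianPDFReal 0 1).restrict)
          hint.restrict (by exact measurableSet_le measurable_const measurable_id) ?_
        intro x hx
        nth_rewrite 1 [← one_mul (gaussianPDFReal 0 1 x)]
        gcongr
        · exact gaussianPDFReal_nonneg 0 1 x
        · rw [← Real.exp_zero]
          exact Real.exp_le_exp.mpr (mul_nonneg hy (sub_nonneg.2 hx))
    _ ≤ ∫ x, rexp (y * (x - y)) * gaussianPDFReal 0 1 x := by
        refine setIntegral_le_integral hint (Filter.Eventually.of_forall fun x => ?_)
        exact mul_nonneg (Real.exp_nonneg _) (gaussianPDFReal_nonneg 0 1 x)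
    _ = rexp (-(y^2)) * ∫ x, rexp (y * x) * gaussianPDFReal 0 1 x := by
        rw [← MeasureTheory.integral_const_mul]
        congr 1; ext x
        rw [← mul_assoc, ← Real.exp_add]; ring_nf
    _ = rexp (-(y ^ 2) / 2) := by
        rw [integral_exp_mul_gpdf, ← Real.exp_add]; ring_nf

lemma integral_exp_neg_sq_gauss {c : ℝ} (hc : 0 < c) :
    ∫ x, rexp (-c * x ^ 2) ∂(gaussianReal 0 1) = 1 / Real.sqrt (1 + 2 * c) := by
  rw [gaussianReal_of_var_ne_zero 0 one_ne_zero]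
  have hpdf : gaussianPDF 0 1 = fun x => ((gaussianPDFReal 0 1 x).toNNReal : ENNReal) := by
    ext x; rw [gaussianPDF_def]; rfl
  rw [hpdf, integral_withDensity_eq_integral_smul
    ((measurable_gaussianPDFReal 0 1).real_toNNReal) _]
  have heq : ∀ x : ℝ, (gaussianPDFReal 0 1 x).toNNReal • rexp (-c * x ^ 2)
      = (Real.sqrt (2 * π))⁻¹ * rexp (-(c + 1/2) * x ^ 2) := by
    intro x
    rw [NNReal.smul_def, Real.coe_toNNReal _ (gaussianPDFReal_nonneg 0 1 x), smul_eq_mul,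
      gaussianPDFReal]
    push_cast
    rw [mul_assoc, ← Real.exp_add]
    norm_num
    left
    ring
  simp_rw [heq]
  rw [MeasureTheory.integral_const_mul, integral_gaussian]
  have h2 : (π / (c + 1/2) : ℝ) = (2 * π) / (1 + 2*c) := by
    rw [div_eq_div_iff (by positivity) (by positivity)]; ring
  rw [h2, Real.sqrt_div' (2*π) (by positivity)]
  have hπ : Real.sqrt (2 * π) ≠ 0 := by positivity
  field_simp

lemma integral_pi_exp_neg_sq (n : ℕ) {c : ℝ} (hc : 0 < c) :
    ∫ v : Fin n → ℝ, rexp (-c * ∑ i, v i ^ 2) ∂(Measure.pi fun _ => gaussianReal 0 1)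
      = (1 / Real.sqrt (1 + 2 * c)) ^ n := by
  have key := MeasureTheory.integral_fintype_prod_eq_pow (𝕜 := ℝ) (ι := Fin n)
    (fun x => rexp (-c * x ^ 2)) (μ := gaussianReal 0 1)
  simp only [Fintype.card_fin] at key
  rw [← integral_exp_neg_sq_gauss hc, ← key]
  congr 1
  ext v
  rw [Finset.mul_sum, Real.exp_sum]

/-- Bound on the second term `s·P({σε ≥ a‖ζ‖ − t(ζ)} ∩ {a‖ζ‖ ≥ t(ζ)})` of `ψ`,
where `t(u) = a‖u‖/2 + σ²log(p/s−1)/(a‖u‖)`, `ε` standard Gaussian and `ζ` an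
independent standard Gaussian vector in `ℝⁿ`. -/
theorem psi_second_term_bound
    {Ω : Type*} [MeasurableSpace Ω] (P : Measure Ω) [IsProbabilityMeasure P]
    (n : ℕ) (hn : 0 < n) (ε : Ω → ℝ) (ζ : Ω → Fin n → ℝ)
    (hεm : Measurable ε) (hζm : Measurable ζ)
    (hε : Measure.map ε P = gaussianReal 0 1)
    (hζ : Measure.map ζ P = Measure.pi fun _ => gaussianReal 0 1)
    (hindep : IndepFun ε ζ P)
    (a σ : ℝ) (ha : 0 < a) (hσ : 0 < σ)
    (s p : ℕ) (hs : 0 < s) (hsp : (s : ℝ) < (p : ℝ) / 2) :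
    (s : ℝ) *
        (P {ω |
            (a * Real.sqrt (∑ i, (ζ ω i) ^ 2)
                - (a * Real.sqrt (∑ i, (ζ ω i) ^ 2) / 2
                    + σ ^ 2 * Real.log ((p : ℝ) / (s : ℝ) - 1)
                        / (a * Real.sqrt (∑ i, (ζ ω i) ^ 2)))
              ≤ σ * ε ω)
            ∧ (a * Real.sqrt (∑ i, (ζ ω i) ^ 2) / 2
                + σ ^ 2 * Real.log ((p : ℝ) / (s : ℝ) - 1)
                    / (a * Real.sqrt (∑ i, (ζ ω i) ^ 2))
              ≤ a * Real.sqrt (∑ i, (ζ ω i) ^ 2))}).toReal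
      ≤ Real.sqrt ((s : ℝ) * ((p : ℝ) - s)) *
          Real.exp (-((n : ℝ) / 2) * Real.log (1 + a ^ 2 / (4 * σ ^ 2))) := by
  have hs0 : (0:ℝ) < (s:ℝ) := by exact_mod_cast hs
  set L : ℝ := Real.log ((p : ℝ) / (s : ℝ) - 1) with hLdef
  set c : ℝ := a ^ 2 / (8 * σ ^ 2) with hcdef
  have hc0 : 0 < c := by positivity
  have hps1 : (1:ℝ) < (p : ℝ) / (s : ℝ) - 1 := by
    rw [lt_sub_iff_add_lt, lt_div_iff₀ hs0]
    linarith
  have hL0 : 0 < L := Real.log_pos hps1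
  set ν : Measure ℝ := gaussianReal 0 1 with hνdef
  set μπ : Measure (Fin n → ℝ) := Measure.pi fun _ => gaussianReal 0 1 with hμπdef
  set g : (Fin n → ℝ) → ℝ := fun v => a * Real.sqrt (∑ i, v i ^ 2) with hgdef
  set t : (Fin n → ℝ) → ℝ := fun v => g v / 2 + σ ^ 2 * L / g v with htdef
  have hgm : Measurable g := by
    apply measurable_const.mul
    exact (Finset.measurable_sum _ fun i _ => (measurable_pi_apply i).pow_const 2).sqrt
  have htm : Measurable t := (hgm.div_const 2).add (measurable_const.div hgm)
  set S : Set ((Fin n → ℝ) × ℝ) :=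
    {q | g q.1 - t q.1 ≤ σ * q.2 ∧ t q.1 ≤ g q.1} with hSdef
  have hSm : MeasurableSet S := by
    refine MeasurableSet.inter ?_ ?_
    · exact measurableSet_le ((hgm.comp measurable_fst).sub (htm.comp measurable_fst))
        (measurable_const.mul measurable_snd)
    · exact measurableSet_le (htm.comp measurable_fst) (hgm.comp measurable_fst)
  have hmap : Measure.map (fun ω => (ζ ω, ε ω)) P = μπ.prod ν := by
    rw [← hζ, ← hε]
    exact (indepFun_iff_map_prod_eq_prod_map_map hζm.aemeasurable hεm.aemeasurable).mp
      hindep.symm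
  have h1 : P {ω |
            (a * Real.sqrt (∑ i, (ζ ω i) ^ 2)
                - (a * Real.sqrt (∑ i, (ζ ω i) ^ 2) / 2
                    + σ ^ 2 * Real.log ((p : ℝ) / (s : ℝ) - 1)
                        / (a * Real.sqrt (∑ i, (ζ ω i) ^ 2)))
              ≤ σ * ε ω)
            ∧ (a * Real.sqrt (∑ i, (ζ ω i) ^ 2) / 2
                + σ ^ 2 * Real.log ((p : ℝ) / (s : ℝ) - 1)
                    / (a * Real.sqrt (∑ i, (ζ ω i) ^ 2))
              ≤ a * Real.sqrt (∑ i, (ζ ω i) ^ 2))} = (μπ.prod ν) S := by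
    rw [← hmap, Measure.map_apply (hζm.prodMk hεm) hSm]
    rfl
  rw [h1, Measure.prod_apply hSm]
  have hslice : ∀ v : Fin n → ℝ, ν (Prod.mk v ⁻¹' S)
      ≤ ENNReal.ofReal (rexp (L / 2) * rexp (-c * ∑ i, v i ^ 2)) := by
    intro v
    have hpre : Prod.mk v ⁻¹' S = {x : ℝ | g v - t v ≤ σ * x ∧ t v ≤ g v} := rfl
    rw [hpre]
    have hsum0 : (0:ℝ) ≤ ∑ i, v i ^ 2 := Finset.sum_nonneg fun i _ => sq_nonneg _
    by_cases hcond : t v ≤ g v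
    · have hsl2 : {x : ℝ | g v - t v ≤ σ * x ∧ t v ≤ g v} = {x | (g v - t v) / σ ≤ x} := by
        ext x
        simp only [Set.mem_setOf_eq, and_iff_left hcond, div_le_iff₀ hσ, mul_comm x σ]
      rw [hsl2]
      rcases eq_or_lt_of_le (Real.sqrt_nonneg (∑ i, v i ^ 2)) with hR | hR
      · -- sqrt = 0 case
        have hsum : (∑ i, v i ^ 2) = 0 := by
          have := Real.sqrt_eq_zero hsum0
          rw [← this, hR]
        refine le_trans prob_le_one ?_
        rw [← ENNReal.ofReal_one]
        refine ENNReal.ofReal_le_ofReal ?_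
        rw [hsum, mul_zero, Real.exp_zero, mul_one]
        exact Real.one_le_exp (by positivity)
      · -- sqrt > 0 case
        have hgv : 0 < g v := mul_pos ha hR
        have hy0 : 0 ≤ (g v - t v) / σ := div_nonneg (sub_nonneg.2 hcond) hσ.le
        refine le_trans (gauss_tail hy0) (ENNReal.ofReal_le_ofReal ?_)
        rw [← Real.exp_add]
        refine Real.exp_le_exp.mpr ?_
        have hR2 : Real.sqrt (∑ i, v i ^ 2) ^ 2 = ∑ i, v i ^ 2 := Real.sq_sqrt hsum0
        set R : ℝ := Real.sqrt (∑ i, v i ^ 2) with hRdef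
        have hgt : g v - t v = a * R / 2 - σ ^ 2 * L / (a * R) := by
          simp only [hgdef, htdef, ← hRdef]
          ring
        have hD : (0:ℝ) < a * R := mul_pos ha hR
        have hsq : (a * R / 2 - σ ^ 2 * L / (a * R)) ^ 2
            = (a * R) ^ 2 / 4 - σ ^ 2 * L + (σ ^ 2 * L / (a * R)) ^ 2 := by
          field_simp
          ring
        have hkey : c * (∑ i, v i ^ 2) - L / 2 ≤ ((g v - t v) / σ) ^ 2 / 2 := by
          rw [div_pow, hgt, hsq, ← hR2, hcdef]
          rw [div_div, le_div_iff₀ (by positivity : (0:ℝ) < σ ^ 2 * 2)]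
          have hid : (a ^ 2 / (8 * σ ^ 2) * R ^ 2 - L / 2) * (σ ^ 2 * 2)
              = (a * R) ^ 2 / 4 - σ ^ 2 * L := by
            field_simp
            ring
          rw [hid]
          nlinarith [sq_nonneg (σ ^ 2 * L / (a * R))]
        linarith
    · have : {x : ℝ | g v - t v ≤ σ * x ∧ t v ≤ g v} = ∅ := by
        ext x; simp [hcond]
      rw [this]
      simp
  have hInt : Integrable (fun v : Fin n → ℝ => rexp (-c * ∑ i, v i ^ 2)) μπ := by
    refine (integrable_const (1:ℝ)).mono' ?_ ?_
    · exact (((Finset.measurable_sum _ fun i _ => (measurable_pi_apply i).pow_const 2).const_mul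
        (-c)).exp).aestronglyMeasurable
    · refine Filter.Eventually.of_forall fun v => ?_
      rw [Real.norm_eq_abs, abs_of_pos (Real.exp_pos _)]
      refine Real.exp_le_one_iff.mpr ?_
      have : (0:ℝ) ≤ ∑ i, v i ^ 2 := Finset.sum_nonneg fun i _ => sq_nonneg _
      nlinarith
  have h2 : ∫⁻ v, ν (Prod.mk v ⁻¹' S) ∂μπ
      ≤ ENNReal.ofReal (rexp (L / 2) * (1 / Real.sqrt (1 + 2 * c)) ^ n) := by
    refine le_trans (lintegral_mono hslice) (le_of_eq ?_)
    simp_rw [ENNReal.ofReal_mul (Real.exp_nonneg _)]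
    rw [lintegral_const_mul' _ _ ENNReal.ofReal_ne_top,
      ← ofReal_integral_eq_lintegral_ofReal hInt
        (Filter.Eventually.of_forall fun v => Real.exp_nonneg _),
      hμπdef, integral_pi_exp_neg_sq n hc0]
  have h3 : (∫⁻ v, ν (Prod.mk v ⁻¹' S) ∂μπ).toReal
      ≤ rexp (L / 2) * (1 / Real.sqrt (1 + 2 * c)) ^ n := by
    have := ENNReal.toReal_mono ENNReal.ofReal_ne_top h2
    rwa [ENNReal.toReal_ofReal (by positivity)] at this
  refine le_trans (mul_le_mul_of_nonneg_left h3 hs0.le) (le_of_eq ?_)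
  have hK1 : (0:ℝ) < a ^ 2 / (4 * σ ^ 2) := by positivity
  have hKpos : (0:ℝ) < 1 + a ^ 2 / (4 * σ ^ 2) := by linarith
  have hK : 1 + 2 * c = 1 + a ^ 2 / (4 * σ ^ 2) := by rw [hcdef]; ring
  have h5 : rexp (-((n:ℝ) / 2) * Real.log (1 + a ^ 2 / (4 * σ ^ 2)))
      = (1 / Real.sqrt (1 + a ^ 2 / (4 * σ ^ 2))) ^ n := by
    rw [show (-((n:ℝ) / 2) * Real.log (1 + a ^ 2 / (4 * σ ^ 2)))
        = (n:ℝ) * (-Real.log (1 + a ^ 2 / (4 * σ ^ 2)) / 2) by ring, Real.exp_nat_mul]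
    congr 1
    rw [Real.exp_half, Real.exp_neg, Real.exp_log hKpos, Real.sqrt_inv, one_div]
  have h6 : (s:ℝ) * rexp (L / 2) = Real.sqrt ((s:ℝ) * ((p:ℝ) - s)) := by
    rw [hLdef, Real.exp_half, Real.exp_log (by linarith : (0:ℝ) < (p:ℝ) / (s:ℝ) - 1)]
    have hsp2 : (s:ℝ) * ((p:ℝ) - s) = (s:ℝ) ^ 2 * ((p:ℝ) / (s:ℝ) - 1) := by
      field_simp
    rw [hsp2, Real.sqrt_mul (sq_nonneg _), Real.sqrt_sq hs0.le]
  rw [← mul_assoc, h6, hK, ← h5]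
end
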